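/- Let ν : ℝ^m ⊗ ℝ^n → ℝ^{mn} be the vectorization e_i ⊗ e_j ↦ e_{n(i−1)+j} and let X : [0,1] → ℝ^m, Y : [0,1] → ℝ^n be continuously differentiable paths. Then for all 1 ≤ i, j ≤ mn, the signature matrix entry of the vectorized product membrane satisfies S(ν∘(X ⊠ Y))_{i,j} = S(X)_{⌈i/n⌉, ⌈j/n⌉} · S(Y)_{((i−1) mod n)+1, ((j−1) mod n)+1}. -/

import Mathlib

open MeasureTheory

noncomputable section

/-- The ordered simplex `0 ≤ t 0 ≤ t 1 ≤ ⋯ ≤ t (k-1) ≤ 1` in `Fin k → ℝ`. -/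
def orderedSimplex (k : ℕ) : Set (Fin k → ℝ) :=
  {t | Monotone t ∧ ∀ a, t a ∈ Set.Icc (0 : ℝ) 1}

/-- Iterated-integral (path) signature entry for a family of scalar coordinate
functions `f a : ℝ → ℝ`, i.e. `⟨σ(X), e_{i₁}* ⊗ ⋯ ⊗ e_{i_k}*⟩` with `f a = X_{i_a}`. -/
def pathSig {k : ℕ} (f : Fin k → ℝ → ℝ) : ℝ :=
  ∫ t in orderedSimplex k, ∏ a, deriv (f a) (t a)

/-- Mixed second partial derivative `∂²/∂s∂t`. -/
def d12 (f : ℝ → ℝ → ℝ) (s t : ℝ) : ℝ :=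
  deriv (fun t' => deriv (fun s' => f s' t') s) t

/-- id-signature entry for a family of scalar membrane coordinate functions. -/
def memSig {k : ℕ} (f : Fin k → ℝ → ℝ → ℝ) : ℝ :=
  ∫ p in (orderedSimplex k) ×ˢ (orderedSimplex k), ∏ a, d12 (f a) (p.1 a) (p.2 a)

/-- with the vectorization `e_i ⊗ e_j ↦ e_{n(i−1)+j}` (0-indexed:
`a ↦ (a / n, a % n)`, via `Fin.divNat` and `Fin.modNat`), the signature matrix of
the vectorized product membrane `ν ∘ (X ⊠ Y)` satisfies
`S(ν∘(X ⊠ Y))_{i,j} = S(X)_{⌈i/n⌉,⌈j/n⌉} · S(Y)_{((i−1) mod n)+1, ((j−1) mod n)+1}`. -/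
theorem vectorized_product_membrane_signature (m n : ℕ)
    (X : ℝ → Fin m → ℝ) (Y : ℝ → Fin n → ℝ)
    (hX : ContDiff ℝ 1 X) (hY : ContDiff ℝ 1 Y)
    (i j : Fin (m * n)) :
    memSig (fun a s t => X s ((![i, j] a).divNat) * Y t ((![i, j] a).modNat))
      = pathSig (fun a t => X t (![i.divNat, j.divNat] a))
        * pathSig (fun a t => Y t (![i.modNat, j.modNat] a)) := by
  have hXd : ∀ c : Fin m, Differentiable ℝ (fun s => X s c) := fun c s =>
    (differentiableAt_pi.mp ((hX.differentiable one_ne_zero) s)) c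
  have hYd : ∀ c : Fin n, Differentiable ℝ (fun s => Y s c) := fun c s =>
    (differentiableAt_pi.mp ((hY.differentiable one_ne_zero) s)) c
  have key : ∀ (c : Fin m) (d : Fin n) (s t : ℝ),
      d12 (fun s t => X s c * Y t d) s t
        = deriv (fun u => X u c) s * deriv (fun u => Y u d) t := by
    intro c d s t
    unfold d12
    have h1 : ∀ t' : ℝ, deriv (fun s' => X s' c * Y t' d) s
        = deriv (fun u => X u c) s * Y t' d := fun t' =>
      deriv_mul_const (hXd c s) _
    simp_rw [h1]
    exact deriv_const_mul _ (hYd d t)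
  have hprod : ∀ p : (Fin 2 → ℝ) × (Fin 2 → ℝ),
      (∏ a, d12 (fun s t => X s ((![i, j] a).divNat) * Y t ((![i, j] a).modNat))
          (p.1 a) (p.2 a))
        = (∏ a, deriv (fun u => X u (![i.divNat, j.divNat] a)) (p.1 a))
          * (∏ a, deriv (fun u => Y u (![i.modNat, j.modNat] a)) (p.2 a)) := by
    intro p
    rw [← Finset.prod_mul_distrib]
    refine Finset.prod_congr rfl fun a _ => ?_
    fin_cases a <;> simp [key]
  unfold memSig pathSig
  simp_rw [hprod]
  rw [Measure.volume_eq_prod]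
  exact setIntegral_prod_mul
    (fun x : Fin 2 → ℝ => ∏ a, deriv (fun u => X u (![i.divNat, j.divNat] a)) (x a))
    (fun y : Fin 2 → ℝ => ∏ a, deriv (fun u => Y u (![i.modNat, j.modNat] a)) (y a)) _ _
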